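/- Let P be a poset, 𝓜, 𝓝 minimal subset selections on P, and x, y, z ∈ P. Then (x ≪_𝓜𝓝 y and y ◁_𝓜𝓝 z) if and only if for every net (x_i)_{i∈I} in P, if (x_i) 𝓜𝓝-converges to y then x_i ∈ ↑x ∩ ↓z eventually. -/

import Mathlib

universe u

/-- A directed preordered index for a net. -/
structure IsDirNet {I : Type u} (r : I → I → Prop) : Prop where
  refl : ∀ i, r i i
  trans : ∀ {i j k : I}, r i j → r j k → r i k
  nonempty : Nonempty I
  directed : ∀ i j, ∃ k, r i k ∧ r j k

/-- A minimal subset selection on a poset `P`. -/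
def MinSel {P : Type u} [PartialOrder P] (M : Set (Set P)) : Prop :=
  (∅ : Set P) ∉ M ∧ ∀ x : P, {x} ∈ M

/-- The net `f : I → P` `𝓜𝓝`-converges to `x`. -/
def MNConv {P : Type u} [PartialOrder P] (M N : Set (Set P))
    {I : Type u} (r : I → I → Prop) (f : I → P) (x : P) : Prop :=
  ∃ A S : Set P, A ∈ M ∧ S ∈ N ∧ IsLUB A x ∧ IsGLB S x ∧
    ∀ a ∈ A, ∀ s ∈ S, ∃ i₀, ∀ i, r i₀ i → a ≤ f i ∧ f i ≤ s

/-- The topology `τ_𝓜𝓝` induced by `𝓜𝓝`-convergence. -/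
def mnTop {P : Type u} [PartialOrder P] (M N : Set (Set P)) : Set (Set P) :=
  {U | ∀ (I : Type u) (r : I → I → Prop) (f : I → P) (x : P),
      IsDirNet r → MNConv M N r f x → x ∈ U → ∃ i₀, ∀ i, r i₀ i → f i ∈ U}

/-- The `𝓜𝓝`-convergence structure is topological. -/
def MNTopological {P : Type u} [PartialOrder P] (M N : Set (Set P)) : Prop :=
  ∀ (I : Type u) (r : I → I → Prop) (f : I → P) (x : P), IsDirNet r →
    (∀ U ∈ mnTop M N, x ∈ U → ∃ i₀, ∀ i, r i₀ i → f i ∈ U) →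
    MNConv M N r f x

/-- The relation `x ≪_𝓜𝓝 y`. -/
def wbMN {P : Type u} [PartialOrder P] (M N : Set (Set P)) (x y : P) : Prop :=
  ∀ A S : Set P, A ∈ M → S ∈ N → IsLUB A y → IsGLB S y →
    ∃ B T : Set P, B.Nonempty ∧ B.Finite ∧ B ⊆ A ∧ T.Nonempty ∧ T.Finite ∧ T ⊆ S ∧
      upperBounds B ∩ lowerBounds T ⊆ Set.Ici x

/-- The relation `y ◁_𝓜𝓝 z`. -/
def triMN {P : Type u} [PartialOrder P] (M N : Set (Set P)) (y z : P) : Prop :=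
  ∀ A S : Set P, A ∈ M → S ∈ N → IsLUB A y → IsGLB S y →
    ∃ B T : Set P, B.Nonempty ∧ B.Finite ∧ B ⊆ A ∧ T.Nonempty ∧ T.Finite ∧ T ⊆ S ∧
      upperBounds B ∩ lowerBounds T ⊆ Set.Iic z

/-- `𝓜𝓝`-continuity of the poset `P`. -/
def MNCont {P : Type u} [PartialOrder P] (M N : Set (Set P)) : Prop :=
  ∀ x y : P,
    (∃ A S : Set P, A ∈ M ∧ S ∈ N ∧ A ⊆ {w | wbMN M N w x} ∧
      S ⊆ {w | triMN M N x w} ∧ IsLUB A x ∧ IsGLB S x) ∧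
    ({w | wbMN M N x w} ∩ {w | triMN M N w y}) ∈ mnTop M N


/-- In a directed net index, every finite set of indices has an upper bound. -/
lemma IsDirNet.finite_bound {I : Type u} {r : I → I → Prop} (h : IsDirNet r)
    {s : Set I} (hs : s.Finite) : ∃ k, ∀ i ∈ s, r i k := by
  refine Set.Finite.induction_on s hs ?_ ?_
  · exact ⟨h.nonempty.some, by simp⟩
  · rintro a t _ _ ⟨k, hk⟩
    obtain ⟨k', hak', hkk'⟩ := h.directed a k
    exact ⟨k', by rintro i (rfl | hi); · exact hak'
                  · exact h.trans (hk i hi) hkk'⟩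

/-- Key auxiliary lemma for the backward direction: if every pair of finite
nonempty subquantities admits a bound point failing `Q`, then the net
consisting of such failing points converges to `y` but never satisfies `Q`. -/
lemma mn_aux {P : Type u} [PartialOrder P] (M N : Set (Set P))
    (hM : MinSel M) (hN : MinSel N) {A S : Set P} {y : P}
    (hA : A ∈ M) (hS : S ∈ N) (hLUB : IsLUB A y) (hGLB : IsGLB S y) (Q : P → Prop)
    (hnet : ∀ (I : Type u) (r : I → I → Prop) (f : I → P), IsDirNet r →
      MNConv M N r f y → ∃ i₀, ∀ i, r i₀ i → Q (f i))
    (hc : ∀ B T : Set P, B.Nonempty → B.Finite → B ⊆ A → T.Nonempty → T.Finite → T ⊆ S →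
      ∃ p, p ∈ upperBounds B ∩ lowerBounds T ∧ ¬ Q p) : False := by
  have hAne : A.Nonempty := by
    rcases A.eq_empty_or_nonempty with h | h
    · exact absurd (h ▸ hA) hM.1
    · exact h
  have hSne : S.Nonempty := by
    rcases S.eq_empty_or_nonempty with h | h
    · exact absurd (h ▸ hS) hN.1
    · exact h
  obtain ⟨a0, ha0⟩ := hAne
  obtain ⟨s0, hs0⟩ := hSne
  let I : Type u := {q : Set P × Set P //
    (q.1.Nonempty ∧ q.1.Finite ∧ q.1 ⊆ A) ∧ (q.2.Nonempty ∧ q.2.Finite ∧ q.2 ⊆ S)}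
  let r : I → I → Prop := fun i j => i.1.1 ⊆ j.1.1 ∧ i.1.2 ⊆ j.1.2
  have hdir : IsDirNet r := by
    refine ⟨fun i => ⟨subset_rfl, subset_rfl⟩,
      fun h1 h2 => ⟨h1.1.trans h2.1, h1.2.trans h2.2⟩,
      ⟨⟨({a0}, {s0}), ⟨⟨a0, rfl⟩, Set.finite_singleton _, by simpa using ha0⟩,
        ⟨s0, rfl⟩, Set.finite_singleton _, by simpa using hs0⟩⟩, ?_⟩
    intro i j
    refine ⟨⟨(i.1.1 ∪ j.1.1, i.1.2 ∪ j.1.2),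
      ⟨i.2.1.1.mono Set.subset_union_left, i.2.1.2.1.union j.2.1.2.1,
        Set.union_subset i.2.1.2.2 j.2.1.2.2⟩,
      ⟨i.2.2.1.mono Set.subset_union_left, i.2.2.2.1.union j.2.2.2.1,
        Set.union_subset i.2.2.2.2 j.2.2.2.2⟩⟩,
      ⟨Set.subset_union_left, Set.subset_union_left⟩,
      ⟨Set.subset_union_right, Set.subset_union_right⟩⟩
  have hchoice : ∀ i : I, ∃ p, p ∈ upperBounds i.1.1 ∩ lowerBounds i.1.2 ∧ ¬ Q p :=
    fun i => hc i.1.1 i.1.2 i.2.1.1 i.2.1.2.1 i.2.1.2.2 i.2.2.1 i.2.2.2.1 i.2.2.2.2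
  choose g hg hg' using hchoice
  have hconv : MNConv M N r g y := by
    refine ⟨A, S, hA, hS, hLUB, hGLB, fun a ha s hs => ?_⟩
    refine ⟨⟨({a}, {s}), ⟨⟨a, rfl⟩, Set.finite_singleton _, by simpa using ha⟩,
      ⟨s, rfl⟩, Set.finite_singleton _, by simpa using hs⟩, fun i hi => ?_⟩
    exact ⟨(hg i).1 (hi.1 rfl), (hg i).2 (hi.2 rfl)⟩
  obtain ⟨i₀, hi₀⟩ := hnet I r g hdir hconv
  exact hg' i₀ (hi₀ i₀ (hdir.refl i₀))

/-- Net characterisation of the conjunction `x ≪_𝓜𝓝 y` and `y ◁_𝓜𝓝 z`. -/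
theorem stmt_13 {P : Type u} [PartialOrder P] (M N : Set (Set P))
    (hM : MinSel M) (hN : MinSel N) (x y z : P) :
    (wbMN M N x y ∧ triMN M N y z) ↔
      ∀ (I : Type u) (r : I → I → Prop) (f : I → P), IsDirNet r →
        MNConv M N r f y → ∃ i₀, ∀ i, r i₀ i → x ≤ f i ∧ f i ≤ z := by
  constructor
  · rintro ⟨hwb, htri⟩ I r f hdir ⟨A, S, hA, hS, hLUB, hGLB, hev⟩
    obtain ⟨B, T, hBne, hBfin, hBA, hTne, hTfin, hTS, hBT⟩ := hwb A S hA hS hLUB hGLB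
    obtain ⟨B', T', hB'ne, hB'fin, hB'A, hT'ne, hT'fin, hT'S, hBT'⟩ := htri A S hA hS hLUB hGLB
    have key : ∀ p : P × P, ∃ i₀, p.1 ∈ A → p.2 ∈ S → ∀ i, r i₀ i → p.1 ≤ f i ∧ f i ≤ p.2 := by
      intro p
      by_cases h1 : p.1 ∈ A
      · by_cases h2 : p.2 ∈ S
        · obtain ⟨i₀, hi⟩ := hev p.1 h1 p.2 h2
          exact ⟨i₀, fun _ _ => hi⟩
        · exact ⟨hdir.nonempty.some, fun _ h => absurd h h2⟩
      · exact ⟨hdir.nonempty.some, fun h => absurd h h1⟩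
    choose F hF using key
    have hfin : ((((B ∪ B') ×ˢ (T ∪ T')).image F)).Finite :=
      (((hBfin.union hB'fin).prod (hTfin.union hT'fin)).image F)
    obtain ⟨k, hk⟩ := hdir.finite_bound hfin
    have hkey : ∀ a ∈ B ∪ B', ∀ s ∈ T ∪ T', ∀ i, r k i → a ≤ f i ∧ f i ≤ s := by
      intro a ha s hs i hi
      have hmem : F (a, s) ∈ ((B ∪ B') ×ˢ (T ∪ T')).image F :=
        Set.mem_image_of_mem F (Set.mk_mem_prod ha hs)
      have haA : a ∈ A := by rcases ha with h | h; exacts [hBA h, hB'A h]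
      have hsS : s ∈ S := by rcases hs with h | h; exacts [hTS h, hT'S h]
      exact hF (a, s) haA hsS i (hdir.trans (hk _ hmem) hi)
    refine ⟨k, fun i hi => ⟨?_, ?_⟩⟩
    · obtain ⟨s, hs⟩ := hTne
      refine hBT ⟨fun b hb => (hkey b (Or.inl hb) s (Or.inl hs) i hi).1,
        fun t ht => ?_⟩
      obtain ⟨b, hb⟩ := hBne
      exact (hkey b (Or.inl hb) t (Or.inl ht) i hi).2
    · obtain ⟨s, hs⟩ := hT'ne
      refine hBT' ⟨fun b hb => (hkey b (Or.inr hb) s (Or.inr hs) i hi).1,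
        fun t ht => ?_⟩
      obtain ⟨b, hb⟩ := hB'ne
      exact (hkey b (Or.inr hb) t (Or.inr ht) i hi).2
  · intro h
    constructor
    · intro A S hA hS hLUB hGLB
      by_contra hcon
      refine mn_aux M N hM hN hA hS hLUB hGLB (fun p => x ≤ p)
        (fun I r f hd hc => (h I r f hd hc).imp fun i₀ hi i hri => (hi i hri).1) ?_
      intro B T h1 h2 h3 h4 h5 h6
      by_contra hq
      push_neg at hq
      exact hcon ⟨B, T, h1, h2, h3, h4, h5, h6, fun p hp => hq p hp⟩
    · intro A S hA hS hLUB hGLB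
      by_contra hcon
      refine mn_aux M N hM hN hA hS hLUB hGLB (fun p => p ≤ z)
        (fun I r f hd hc => (h I r f hd hc).imp fun i₀ hi i hri => (hi i hri).2) ?_
      intro B T h1 h2 h3 h4 h5 h6
      by_contra hq
      push_neg at hq
      exact hcon ⟨B, T, h1, h2, h3, h4, h5, h6, fun p hp => hq p hp⟩
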